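/- (Theorem 3.) Let R̂ be Hermitian positive definite and C̄ Hermitian positive semidefinite, and let (W, x, y₁, y₂) be an optimal solution of the primal problem (i.e., primal feasible with tr(R̂ W) ≤ tr(R̂ W') for every primal-feasible tuple (W', x', y₁', y₂')) and (Z, z₁, z₂) an optimal solution of the dual problem (i.e., dual feasible with z₁ ≥ z₁' for every dual-feasible tuple (Z', z₁', z₂')). Suppose the optimal values agree and are positive: tr(R̂ W) = z₁ > 0 (so W ≠ 0). If tr(R̂^{-1} Z) ≤ 1, then rank(W) = 1. -/

import Mathlib

open Matrix
open scoped ComplexOrder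

section Helpers

variable {n : Type*} [Fintype n] [DecidableEq n]

section SqrtPort
open scoped MatrixOrder

noncomputable def Matrix.PosSemidef.sqrt {A : Matrix n n ℂ} (_hA : A.PosSemidef) :
    Matrix n n ℂ := CFC.sqrt A

lemma Matrix.PosSemidef.sqrt_mul_self {A : Matrix n n ℂ} (hA : A.PosSemidef) :
    hA.sqrt * hA.sqrt = A := CFC.sqrt_mul_sqrt_self A hA.nonneg

lemma Matrix.PosSemidef.posSemidef_sqrt {A : Matrix n n ℂ} (hA : A.PosSemidef) :
    hA.sqrt.PosSemidef := (CFC.sqrt_nonneg A).posSemidef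

end SqrtPort

/-- trace of a Hermitian matrix is the (real) sum of its eigenvalues. -/
lemma herm_trace_eq {A : Matrix n n ℂ} (hA : A.IsHermitian) :
    A.trace = ((∑ i, hA.eigenvalues i : ℝ) : ℂ) := by
  conv_lhs => rw [hA.spectral_theorem, Unitary.conjStarAlgAut_apply]
  rw [Matrix.trace_mul_cycle]
  have hu : (star (hA.eigenvectorUnitary : Matrix n n ℂ)) *
      (hA.eigenvectorUnitary : Matrix n n ℂ) = 1 := hA.eigenvectorUnitary.2.1
  rw [hu, Matrix.one_mul, Matrix.trace_diagonal]
  push_cast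
  rfl

lemma psd_trace_nonneg {A : Matrix n n ℂ} (hA : A.PosSemidef) : 0 ≤ A.trace := by
  rw [herm_trace_eq hA.isHermitian]
  have : (0:ℝ) ≤ ∑ i, hA.isHermitian.eigenvalues i :=
    Finset.sum_nonneg fun i _ => hA.eigenvalues_nonneg i
  exact_mod_cast this

lemma psd_trace_mul_eq {A B : Matrix n n ℂ} (hA : A.PosSemidef) :
    (A * B).trace = (hA.sqrt * B * hA.sqrt).trace := by
  conv_lhs => rw [← hA.sqrt_mul_self]
  rw [Matrix.mul_assoc, Matrix.trace_mul_comm, Matrix.mul_assoc]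

lemma psd_sqrt_mul_mul_sqrt_posSemidef {A B : Matrix n n ℂ} (hA : A.PosSemidef)
    (hB : B.PosSemidef) : (hA.sqrt * B * hA.sqrt).PosSemidef := by
  have := hB.conjTranspose_mul_mul_same (B := hA.sqrt)
  rwa [hA.posSemidef_sqrt.isHermitian.eq] at this

lemma psd_trace_mul_nonneg {A B : Matrix n n ℂ} (hA : A.PosSemidef) (hB : B.PosSemidef) :
    0 ≤ (A * B).trace := by
  rw [psd_trace_mul_eq hA]
  exact psd_trace_nonneg (psd_sqrt_mul_mul_sqrt_posSemidef hA hB)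

lemma trace_mul_conjTranspose_self_eq_zero {M : Matrix n n ℂ}
    (h : (M * Mᴴ).trace = 0) : M = 0 := by
  have hd : ∀ i, (M * Mᴴ) i i = dotProduct (M i) (star (M i)) := fun i => by
    simp [Matrix.mul_apply, dotProduct, Matrix.conjTranspose_apply]
  have h0 : ∀ i ∈ Finset.univ, (M * Mᴴ) i i = 0 := by
    rw [Matrix.trace] at h
    refine (Finset.sum_eq_zero_iff_of_nonneg fun i _ => ?_).mp h
    show (0:ℂ) ≤ (M * Mᴴ) i i
    rw [hd]
    exact dotProduct_self_star_nonneg _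
  funext i
  have := (dotProduct_self_star_eq_zero (v := M i)).mp ((hd i) ▸ h0 i (Finset.mem_univ i))
  exact this

lemma psd_mul_eq_zero_of_trace {A B : Matrix n n ℂ} (hA : A.PosSemidef) (hB : B.PosSemidef)
    (h : (A * B).trace = 0) : A * B = 0 := by
  set sA := hA.sqrt with hsA
  set sB := hB.sqrt with hsB
  have hAe : sA * sA = A := hA.sqrt_mul_self
  have hBe : sB * sB = B := hB.sqrt_mul_self
  have hct : (sA * sB)ᴴ = sB * sA := by
    rw [Matrix.conjTranspose_mul, hA.posSemidef_sqrt.isHermitian.eq,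
      hB.posSemidef_sqrt.isHermitian.eq]
  have key : (sA * sB) * (sA * sB)ᴴ = sA * B * sA := by
    rw [hct, ← hBe]; noncomm_ring
  have h2 : ((sA * sB) * (sA * sB)ᴴ).trace = 0 := by
    rw [key, ← psd_trace_mul_eq hA, h]
  have h3 : sA * sB = 0 := trace_mul_conjTranspose_self_eq_zero h2
  calc A * B = sA * (sA * sB) * sB := by rw [← hAe, ← hBe]; noncomm_ring
  _ = 0 := by rw [h3]; noncomm_ring

lemma eig_le_one {B : Matrix n n ℂ} (hB : B.IsHermitian) (h1 : (1 - B).PosSemidef) (i : n) :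
    hB.eigenvalues i ≤ 1 := by
  have hv := hB.mulVec_eigenvectorBasis i
  have hnorm : (star ⇑(hB.eigenvectorBasis i)) ⬝ᵥ ⇑(hB.eigenvectorBasis i) = 1 := by
    have := hB.eigenvectorBasis.orthonormal.1 i
    have h2 : (inner ℂ (hB.eigenvectorBasis i) (hB.eigenvectorBasis i) : ℂ) = 1 := by
      rw [inner_self_eq_norm_sq_to_K, this]; norm_num
    rw [EuclideanSpace.inner_eq_star_dotProduct] at h2
    rw [dotProduct_comm]; exact h2
  have hpos := h1.dotProduct_mulVec_nonneg ⇑(hB.eigenvectorBasis i)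
  rw [Matrix.sub_mulVec, Matrix.one_mulVec, dotProduct_sub, hv] at hpos
  have hsm : (star ⇑(hB.eigenvectorBasis i)) ⬝ᵥ (hB.eigenvalues i • ⇑(hB.eigenvectorBasis i))
      = (hB.eigenvalues i : ℂ) := by
    rw [dotProduct_smul]
    rw [hnorm]
    simp [Complex.real_smul]
  rw [hsm, hnorm] at hpos
  have hc : ((1 - hB.eigenvalues i : ℝ) : ℂ) = 1 - (hB.eigenvalues i : ℂ) := by push_cast; ring
  rw [← hc, Complex.zero_le_real] at hpos
  linarith

lemma matrix_rank_eq_zero_iff {m : Type*} [Fintype m] {A : Matrix m n ℂ}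
    (h : A.rank = 0) : A = 0 := by
  have hr : LinearMap.range A.mulVecLin = ⊥ := by
    rw [Matrix.rank] at h
    exact Submodule.finrank_eq_zero.mp h
  have h2 : A.mulVecLin = 0 := LinearMap.range_eq_bot.mp hr
  funext i j
  have h3 : A *ᵥ Pi.single j 1 = 0 := by
    have := congrArg (fun f => f (Pi.single j 1)) (congrArg DFunLike.coe h2)
    simpa using this
  have := congrFun h3 i
  simpa using this

end Helpers

/-- The eigenvalues of a Hermitian matrix listed in decreasing order:
`eigDesc hA 0 ≥ eigDesc hA 1 ≥ … ≥ eigDesc hA (N-1)`. -/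
noncomputable def eigDesc {N : ℕ} {A : Matrix (Fin N) (Fin N) ℂ} (hA : A.IsHermitian)
    (i : Fin N) : ℝ :=
  hA.eigenvalues (Tuple.sort hA.eigenvalues i.rev)

/-- Primal feasibility: `W ⪰ 0`, `x ≤ 0`, `y₁ ≥ 0`, `y₂ ≤ 0`,
`Δ₀x + (N−η₁)y₁ + (N+η₂)y₂ = 1`, `W − xC̄ − (y₁+y₂)I ⪰ 0`, and
`xλ_{N−1}(C̄) + y₁ + y₂ ≤ 0`. -/
noncomputable def PrimalFeas {N : ℕ} (hN : 2 ≤ N) (Cbar : Matrix (Fin N) (Fin N) ℂ)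
    (hC : Cbar.IsHermitian) (Δ₀ η₁ η₂ : ℝ)
    (W : Matrix (Fin N) (Fin N) ℂ) (x y₁ y₂ : ℝ) : Prop :=
  W.PosSemidef ∧ x ≤ 0 ∧ 0 ≤ y₁ ∧ y₂ ≤ 0 ∧
  Δ₀ * x + ((N : ℝ) - η₁) * y₁ + ((N : ℝ) + η₂) * y₂ = 1 ∧
  (W - (x : ℂ) • Cbar - ((y₁ + y₂ : ℝ) : ℂ) • 1).PosSemidef ∧
  x * eigDesc hC ⟨N - 2, by omega⟩ + y₁ + y₂ ≤ 0

/-- Dual feasibility: `Z ⪰ 0`, `z₂ ≥ 0`, `R̂ − Z ⪰ 0`,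
`tr(C̄Z) − Δ₀z₁ + λ_{N−1}(C̄)z₂ ≤ 0`, and `z₁(N−η₁) ≤ tr Z + z₂ ≤ z₁(N+η₂)`. -/
noncomputable def DualFeas {N : ℕ} (hN : 2 ≤ N) (Cbar : Matrix (Fin N) (Fin N) ℂ)
    (hC : Cbar.IsHermitian) (Rhat : Matrix (Fin N) (Fin N) ℂ) (Δ₀ η₁ η₂ : ℝ)
    (Z : Matrix (Fin N) (Fin N) ℂ) (z₁ z₂ : ℝ) : Prop :=
  Z.PosSemidef ∧ 0 ≤ z₂ ∧ (Rhat - Z).PosSemidef ∧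
  (Matrix.trace (Cbar * Z)).re - Δ₀ * z₁ + eigDesc hC ⟨N - 2, by omega⟩ * z₂ ≤ 0 ∧
  z₁ * ((N : ℝ) - η₁) ≤ (Matrix.trace Z).re + z₂ ∧
  (Matrix.trace Z).re + z₂ ≤ z₁ * ((N : ℝ) + η₂)

/-- Theorem 3: let `(W, x, y₁, y₂)` be primal optimal and `(Z, z₁, z₂)` dual optimal with
equal positive optimal values `tr(R̂W) = z₁ > 0`. If `tr(R̂⁻¹Z) ≤ 1`, then `rank W = 1`. -/
theorem stmt_17 {N : ℕ} (hN : 2 ≤ N) (η₁ η₂ : ℝ) (hη₁0 : 0 ≤ η₁) (hη₁N : η₁ < N)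
    (hη₂ : 0 ≤ η₂) (Δ₀ : ℝ) (hΔ₀ : 0 < Δ₀)
    (Cbar : Matrix (Fin N) (Fin N) ℂ) (hC : Cbar.PosSemidef)
    (Rhat : Matrix (Fin N) (Fin N) ℂ) (hR : Rhat.PosDef)
    (W Z : Matrix (Fin N) (Fin N) ℂ) (x y₁ y₂ z₁ z₂ : ℝ)
    (hP : PrimalFeas hN Cbar hC.isHermitian Δ₀ η₁ η₂ W x y₁ y₂)
    (hPopt : ∀ (W' : Matrix (Fin N) (Fin N) ℂ) (x' y₁' y₂' : ℝ),
      PrimalFeas hN Cbar hC.isHermitian Δ₀ η₁ η₂ W' x' y₁' y₂' →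
      (Matrix.trace (Rhat * W)).re ≤ (Matrix.trace (Rhat * W')).re)
    (hD : DualFeas hN Cbar hC.isHermitian Rhat Δ₀ η₁ η₂ Z z₁ z₂)
    (hDopt : ∀ (Z' : Matrix (Fin N) (Fin N) ℂ) (z₁' z₂' : ℝ),
      DualFeas hN Cbar hC.isHermitian Rhat Δ₀ η₁ η₂ Z' z₁' z₂' → z₁' ≤ z₁)
    (hgap : (Matrix.trace (Rhat * W)).re = z₁) (hpos : 0 < z₁)
    (htr : (Matrix.trace (Rhat⁻¹ * Z)).re ≤ 1) :
    W.rank = 1 := by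
  classical
  obtain ⟨hW, hx, hy₁, hy₂, hsum, hE, hlamP⟩ := hP
  obtain ⟨hZ, hz₂, hD0, hCZ, htl, htu⟩ := hD
  set lam := eigDesc hC.isHermitian (⟨N - 2, by omega⟩ : Fin N) with hlam
  set E : Matrix (Fin N) (Fin N) ℂ := W - (x:ℂ) • Cbar - ((y₁ + y₂ : ℝ):ℂ) • 1 with hEdef
  -- Step 1: complementary slackness : (Rhat - Z) * W = 0
  have hsplit : Matrix.trace (Rhat * W)
      = Matrix.trace ((Rhat - Z) * W) + Matrix.trace (Z * W) := by
    rw [← Matrix.trace_add]; congr 1; noncomm_ring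
  have hZWsplit : Z * W = Z * E + (x:ℂ) • (Z * Cbar) + ((y₁ + y₂ : ℝ):ℂ) • Z := by
    rw [hEdef, Matrix.mul_sub, Matrix.mul_sub, Matrix.mul_smul, Matrix.mul_smul,
      Matrix.mul_one]
    abel
  have hsplit2 : Matrix.trace (Z * W) = Matrix.trace (Z * E)
      + (x:ℂ) * Matrix.trace (Cbar * Z) + ((y₁ + y₂ : ℝ):ℂ) * Matrix.trace Z := by
    rw [hZWsplit, Matrix.trace_add, Matrix.trace_add, Matrix.trace_smul, Matrix.trace_smul,
      Matrix.trace_mul_comm Z Cbar, smul_eq_mul, smul_eq_mul]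
  set a := (Matrix.trace ((Rhat - Z) * W)).re with hadef
  set b := (Matrix.trace (Z * E)).re with hbdef
  set c := (Matrix.trace (Cbar * Z)).re with hcdef
  set t := (Matrix.trace Z).re with htdef
  have hre : z₁ = a + (b + x * c + (y₁ + y₂) * t) := by
    rw [← hgap, hsplit, hsplit2]
    simp only [Complex.add_re, Complex.re_ofReal_mul, hadef, hbdef, hcdef, htdef]
    try ring
  have ha : 0 ≤ a := by
    have h := (Complex.le_def.mp (psd_trace_mul_nonneg hD0 hW)).1
    simpa using h
  have hb : 0 ≤ b := by
    have h := (Complex.le_def.mp (psd_trace_mul_nonneg hZ hE)).1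
    simpa using h
  have hxc : x * (Δ₀ * z₁ - lam * z₂) ≤ x * c :=
    mul_le_mul_of_nonpos_left (by linarith) hx
  have hy1t : y₁ * (z₁ * ((N:ℝ) - η₁) - z₂) ≤ y₁ * t :=
    mul_le_mul_of_nonneg_left (by linarith) hy₁
  have hy2t : y₂ * (z₁ * ((N:ℝ) + η₂) - z₂) ≤ y₂ * t :=
    mul_le_mul_of_nonpos_left (by linarith) hy₂
  have hz2s : 0 ≤ z₂ * (-(x * lam + y₁ + y₂)) := mul_nonneg hz₂ (by linarith)
  have hsz : (Δ₀ * x + ((N:ℝ) - η₁) * y₁ + ((N:ℝ) + η₂) * y₂) * z₁ = 1 * z₁ := by rw [hsum]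
  have ha0 : a = 0 := by
    have hle : a ≤ 0 := by nlinarith [hxc, hy1t, hy2t, hz2s, hsz, hb, hre]
    linarith
  have htr0 : Matrix.trace ((Rhat - Z) * W) = 0 := by
    have hnn := psd_trace_mul_nonneg hD0 hW
    have him := (Complex.le_def.mp hnn).2
    rw [Complex.ext_iff]
    exact ⟨ha0, by simpa using him.symm⟩
  have hZW : Z * W = Rhat * W := by
    have h0 := psd_mul_eq_zero_of_trace hD0 hW htr0
    have h2 : Rhat * W - Z * W = 0 := by rw [← Matrix.sub_mul]; exact h0
    have := sub_eq_zero.mp h2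
    exact this.symm
  -- Step 2: rank bound via the square root of Rhat
  set S := hR.posSemidef.sqrt with hS
  have hSH : S.IsHermitian := hR.posSemidef.posSemidef_sqrt.isHermitian
  have hRSS : S * S = Rhat := hR.posSemidef.sqrt_mul_self
  have hdetS : IsUnit S.det := by
    have hdet : S.det * S.det = Rhat.det := by rw [← Matrix.det_mul, hRSS]
    have hRdet : Rhat.det ≠ 0 := hR.det_pos.ne'
    rw [← hdet] at hRdet
    exact isUnit_iff_ne_zero.mpr (mul_ne_zero_iff.mp hRdet).1
  set T := S⁻¹ with hT
  have hTH : T.IsHermitian := hSH.inv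
  have hTS : T * S = 1 := Matrix.nonsing_inv_mul S hdetS
  have hST : S * T = 1 := Matrix.mul_nonsing_inv S hdetS
  set M := T * Z * T with hM
  have hMpsd : M.PosSemidef := by
    have h := hZ.conjTranspose_mul_mul_same (B := T)
    rwa [hTH.eq] at h
  have e1 : T * (S * S) * T = 1 := by
    rw [← Matrix.mul_assoc, hTS, Matrix.one_mul, hST]
  have h1M : (1 - M).PosSemidef := by
    have h := hD0.conjTranspose_mul_mul_same (B := T)
    rw [hTH.eq] at h
    have heq : T * (Rhat - Z) * T = 1 - M := by
      rw [← hRSS, hM, Matrix.mul_sub, Matrix.sub_mul, e1]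
    rwa [heq] at h
  have hTT : T * T = Rhat⁻¹ := by
    rw [hT, ← Matrix.mul_inv_rev, hRSS]
  have htrM : Matrix.trace M = Matrix.trace (Rhat⁻¹ * Z) := by
    rw [hM, Matrix.trace_mul_cycle, hTT]
  set Wt := S * W * S with hWt
  have hWtpsd : Wt.PosSemidef := by
    have h := hW.conjTranspose_mul_mul_same (B := S)
    rwa [hSH.eq] at h
  have hMWt : M * Wt = Wt := by
    calc M * Wt = (T * Z) * ((T * S) * (W * S)) := by rw [hM, hWt]; noncomm_ring
    _ = (T * Z) * (W * S) := by rw [hTS, Matrix.one_mul]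
    _ = T * (Z * W) * S := by noncomm_ring
    _ = ((T * S) * S) * (W * S) := by rw [hZW, ← hRSS]; noncomm_ring
    _ = S * (W * S) := by rw [hTS, Matrix.one_mul]
    _ = Wt := by rw [hWt]; noncomm_ring
  have hBWt : (1 - M) * Wt = 0 := by rw [Matrix.sub_mul, Matrix.one_mul, hMWt, sub_self]
  have hrkWt : Wt.rank = W.rank := by
    rw [hWt, Matrix.rank_mul_eq_left_of_isUnit_det S (S * W) hdetS,
      Matrix.rank_mul_eq_right_of_isUnit_det S W hdetS]
  have hWne : W ≠ 0 := by
    intro h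
    rw [h, Matrix.mul_zero, Matrix.trace_zero] at hgap
    simp at hgap
    linarith
  have hrk1 : 1 ≤ W.rank := by
    rcases Nat.eq_zero_or_pos W.rank with h | h
    · exact absurd (matrix_rank_eq_zero_iff h) hWne
    · exact h
  have hBH : (1 - M).IsHermitian := h1M.isHermitian
  have hle1 : ∀ i, hBH.eigenvalues i ≤ 1 := by
    intro i
    refine eig_le_one hBH ?_ i
    rw [sub_sub_cancel]
    exact hMpsd
  have hnn : ∀ i, 0 ≤ hBH.eigenvalues i := h1M.eigenvalues_nonneg
  have htrB : ((1 - M).trace).re = ∑ i, hBH.eigenvalues i := by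
    rw [herm_trace_eq hBH, Complex.ofReal_re]
  have hsum_le : ∑ i, hBH.eigenvalues i ≤ ((1 - M).rank : ℝ) := by
    rw [hBH.rank_eq_card_non_zero_eigs]
    have hfilter : ∑ i, hBH.eigenvalues i
        = ∑ i ∈ Finset.univ.filter (fun i => hBH.eigenvalues i ≠ 0), hBH.eigenvalues i :=
      (Finset.sum_filter_of_ne (fun i _ hne => hne)).symm
    have hcard : Fintype.card {i // hBH.eigenvalues i ≠ 0}
        = (Finset.univ.filter (fun i => hBH.eigenvalues i ≠ 0)).card :=
      Fintype.card_subtype _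
    rw [hfilter, hcard]
    have := Finset.sum_le_card_nsmul (Finset.univ.filter (fun i => hBH.eigenvalues i ≠ 0))
      (fun i => hBH.eigenvalues i) 1 (fun i _ => hle1 i)
    simpa using this
  have hrkN : (1 - M).rank + Wt.rank ≤ N := by
    have h := Matrix.rank_add_rank_le_card_of_mul_eq_zero hBWt
    simpa using h
  have htrMre : (Matrix.trace M).re ≤ 1 := by rw [htrM]; exact htr
  have htr1M : ((1 - M).trace).re = (N:ℝ) - (Matrix.trace M).re := by
    rw [Matrix.trace_sub, Matrix.trace_one]
    simp
  have hfin : (W.rank : ℝ) ≤ 1 := by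
    have h1 : ((1 - M).rank : ℝ) + (Wt.rank : ℝ) ≤ (N : ℝ) := by exact_mod_cast hrkN
    rw [← hrkWt]
    linarith [hsum_le, htrB ▸ htr1M]
  have : W.rank ≤ 1 := by exact_mod_cast hfin
  omega
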